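/- In the multiple Geronimus setting with both ( , )₀ and B positive definite (B(hf,g)=B(f,hg)=(f,g)₀, h monic of degree N), the norms satisfy (h*_{n+N})² := B(P_{n+N}^*, P_{n+N}^*) = A_n^{[n+N]} · ‖P_n‖₀², where A_n^{[n+N]} is the coefficient of P_n in the expansion P_{n+N}^* = P_{n+N} + Σ_{k=1}^{N} A_{n+N−k}^{[n+N]} P_{n+N−k} and ‖P_n‖₀² = (P_n,P_n)₀. -/

import Mathlib

open Polynomial

theorem norm_of_Pstar (N : ℕ) (hN : 1 ≤ N)
    (h : Polynomial ℝ) (hmonic : h.Monic) (hdeg : h.natDegree = N)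
    (B₀ B : Polynomial ℝ →ₗ[ℝ] Polynomial ℝ →ₗ[ℝ] ℝ)
    (hsym₀ : ∀ f g, B₀ f g = B₀ g f) (hsym : ∀ f g, B f g = B g f)
    (hpos₀ : ∀ q : Polynomial ℝ, q ≠ 0 → 0 < B₀ q q)
    (hpos : ∀ q : Polynomial ℝ, q ≠ 0 → 0 < B q q)
    (hrel : ∀ f g, B (h * f) g = B₀ f g) (hrel' : ∀ f g, B f (h * g) = B₀ f g)
    (P : ℕ → Polynomial ℝ)
    (hPmonic : ∀ n, (P n).Monic) (hPdeg : ∀ n, (P n).natDegree = n)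
    (hPorth : ∀ n : ℕ, ∀ q : Polynomial ℝ, q.degree < n → B₀ (P n) q = 0)
    (Pstar : ℕ → Polynomial ℝ)
    (hQmonic : ∀ n, (Pstar n).Monic) (hQdeg : ∀ n, (Pstar n).natDegree = n)
    (hQorth : ∀ n : ℕ, ∀ q : Polynomial ℝ, q.degree < n → B (Pstar n) q = 0)
    (A : ℕ → ℕ → ℝ)
    (hPstar : ∀ n, Pstar n =
      P n + ∑ k ∈ Finset.Icc 1 (min N n), C (A (n - k) n) * P (n - k)) :
    ∀ n : ℕ, B (Pstar (n + N)) (Pstar (n + N)) = A n (n + N) * B₀ (P n) (P n) := by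
  intro n
  set m := n + N with hm
  have hdegP : ∀ j, (P j).degree = (j : WithBot ℕ) := fun j => by
    rw [Polynomial.degree_eq_natDegree (hPmonic j).ne_zero, hPdeg j]
  have hdegh : h.degree = (N : WithBot ℕ) := by
    rw [Polynomial.degree_eq_natDegree hmonic.ne_zero, hdeg]
  -- Step 1: replace second argument by h * P n
  have key1 : B (Pstar m) (Pstar m) = B (Pstar m) (h * P n) := by
    have hdmul : (h * P n).degree = (m : WithBot ℕ) := by
      rw [Polynomial.degree_mul, hdegh, hdegP n, hm]
      push_cast
      ring
    have hd : (h * P n - Pstar m).degree < (m : WithBot ℕ) := by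
      rw [← hdmul]
      apply Polynomial.degree_sub_lt
      · rw [hdmul, Polynomial.degree_eq_natDegree (hQmonic m).ne_zero, hQdeg]
      · exact (hmonic.mul (hPmonic n)).ne_zero
      · rw [(hmonic.mul (hPmonic n)).leadingCoeff, (hQmonic m).leadingCoeff]
    have h0 := hQorth m _ hd
    have : B (Pstar m) (h * P n) - B (Pstar m) (Pstar m) = 0 := by
      rw [← map_sub]; exact h0
    linarith
  rw [key1, hrel']
  -- Step 2: expand Pstar m
  have hminN : min N m = N := min_eq_left (by omega)
  rw [hPstar m, hminN, map_add, map_sum]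
  simp only [LinearMap.add_apply, LinearMap.coe_sum, Finset.sum_apply]
  have hPmn : B₀ (P m) (P n) = 0 := by
    apply hPorth m
    rw [hdegP n]
    exact_mod_cast (by omega : n < m)
  rw [hPmn, zero_add]
  rw [Finset.sum_eq_single N]
  · have : m - N = n := by omega
    rw [this]
    have : (C (A n m) * P n : Polynomial ℝ) = (A n m) • P n := by
      rw [Polynomial.smul_eq_C_mul]
    rw [this, map_smul]
    simp [smul_eq_mul]
  · intro k hk hkN
    have hk1 : 1 ≤ k ∧ k ≤ N := by
      simpa using Finset.mem_Icc.mp hk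
    have : (C (A (m - k) m) * P (m - k) : Polynomial ℝ) = (A (m - k) m) • P (m - k) := by
      rw [Polynomial.smul_eq_C_mul]
    rw [this, map_smul]
    have : B₀ (P (m - k)) (P n) = 0 := by
      apply hPorth (m - k)
      rw [hdegP n]
      exact_mod_cast (by omega : n < m - k)
    simp [this]
  · intro hN'
    simp at hN'
    omega
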